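/- In H(n,k,p_n) with k ≥ 2 fixed and expected degree λ_n := C(n−1,k−1)·p_n = log n + c for a fixed real c, for every fixed r ≥ 1 the expected number of star-collisions of support size r tends to 0 as n → ∞; in particular P(X_r ≥ 1) → 0. -/

import Mathlib

/-- All `k`-element subsets of `[n]`, the possible hyperedges of a `k`-uniform
hypergraph on `n` vertices. -/
def kSets (n k : ℕ) : Finset (Finset (Fin n)) :=
  (Finset.univ : Finset (Fin n)).powersetCard k

/-- The probability, in the random hypergraph `H(n,k,p)` where each `k`-subset is a
hyperedge independently with probability `p`, of a given edge set `E`. -/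
noncomputable def hweight (n k : ℕ) (p : ℝ) (E : Finset (Finset (Fin n))) : ℝ :=
  if E ⊆ kSets n k then p ^ E.card * (1 - p) ^ ((kSets n k).card - E.card) else 0

open Classical in
/-- The probability of an event `A` under `H(n,k,p)`. -/
noncomputable def hprob (n k : ℕ) (p : ℝ) (A : Finset (Finset (Fin n)) → Prop) : ℝ :=
  ∑ E : Finset (Finset (Fin n)), if A E then hweight n k p E else 0

/-- The expectation of a random variable `f` under `H(n,k,p)`. -/
noncomputable def hexp (n k : ℕ) (p : ℝ) (f : Finset (Finset (Fin n)) → ℝ) : ℝ :=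
  ∑ E : Finset (Finset (Fin n)), hweight n k p E * f E

/-- The star of a vertex `v`: the set of hyperedges of `E` containing `v`. -/
def hstar {n : ℕ} (E : Finset (Finset (Fin n))) (v : Fin n) : Finset (Finset (Fin n)) :=
  E.filter (fun e => v ∈ e)

/-- `X_r`: the number of unordered pairs of (distinct) vertices with identical stars of
size exactly `r` (star-collisions of support size `r`). -/
def Xr (n r : ℕ) (E : Finset (Finset (Fin n))) : ℕ :=
  ((Finset.univ : Finset (Fin n)).powersetCard 2 |>.filter
    (fun P => (∀ u ∈ P, ∀ v ∈ P, hstar E u = hstar E v) ∧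
      ∀ u ∈ P, (hstar E u).card = r)).card

open Filter

lemma binom_sum {α : Type*} [DecidableEq α] (s : Finset α) (p : ℝ) :
    ∑ t ∈ s.powerset, p ^ t.card * (1 - p) ^ (s.card - t.card) = 1 := by
  have h := Finset.prod_add (fun _ : α => p) (fun _ : α => 1 - p) s
  simp only [add_sub_cancel, Finset.prod_const, one_pow] at h
  rw [show ∑ t ∈ s.powerset, p ^ t.card * (1 - p) ^ (s.card - t.card)
      = ∑ x ∈ s.powerset, p ^ x.card * (1 - p) ^ (s \ x).card from
    Finset.sum_congr rfl fun t ht => by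
      rw [Finset.card_sdiff_of_subset (Finset.mem_powerset.mp ht)]]
  exact h.symm

lemma hprob_congr (n k : ℕ) (p : ℝ) (A B : Finset (Finset (Fin n)) → Prop)
    (h : ∀ E, A E ↔ B E) : hprob n k p A = hprob n k p B := by
  classical
  simp only [hprob]
  exact Finset.sum_congr rfl fun E _ => if_congr (h E) rfl rfl

lemma hweight_nonneg (n k : ℕ) (p : ℝ) (hp0 : 0 ≤ p) (hp1 : p ≤ 1)
    (E : Finset (Finset (Fin n))) : 0 ≤ hweight n k p E := by
  unfold hweight
  have h1 : 0 ≤ 1 - p := by linarith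
  split_ifs
  · positivity
  · exact le_refl _

lemma hprob_pair (n k : ℕ) (p : ℝ) (u v : Fin n) (huv : u ≠ v) (r : ℕ) :
    hprob n k p (fun E => hstar E u = hstar E v ∧ (hstar E u).card = r)
      = (((kSets n k).filter (fun e => u ∈ e ∧ v ∈ e)).card.choose r : ℝ) * p ^ r *
        (1 - p) ^ (((kSets n k).filter (fun e => u ∈ e ∨ v ∈ e)).card - r) := by
  classical
  set s := kSets n k with hs
  set T := s.filter (fun e => u ∈ e ∨ v ∈ e) with hT
  set B := s.filter (fun e => u ∈ e ∧ v ∈ e) with hB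
  have hTs : T ⊆ s := Finset.filter_subset _ _
  have hBT : B ⊆ T := by
    intro e he
    rw [hB, Finset.mem_filter] at he
    exact Finset.mem_filter.mpr ⟨he.1, Or.inl he.2.1⟩
  set N := s.card with hN
  have step1 : hprob n k p (fun E => hstar E u = hstar E v ∧ (hstar E u).card = r)
      = ∑ E ∈ Finset.univ.filter
          (fun E => E ⊆ s ∧ hstar E u = hstar E v ∧ (hstar E u).card = r),
          p ^ E.card * (1 - p) ^ (N - E.card) := by
    rw [hprob, Finset.sum_filter]
    apply Finset.sum_congr rfl
    intro E _
    unfold hweight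
    by_cases h1 : hstar E u = hstar E v ∧ (hstar E u).card = r <;>
      by_cases h2 : E ⊆ s <;> simp [h1, h2, ← hs, ← hN]
  -- key structural fact
  have key : ∀ E : Finset (Finset (Fin n)), E ⊆ s → hstar E u = hstar E v →
      E ∩ T = hstar E u ∧ hstar E u ⊆ B := by
    intro E hE hst
    have huv' : ∀ e ∈ E, (u ∈ e ↔ v ∈ e) := by
      intro e he
      constructor
      · intro hu
        have : e ∈ hstar E v := hst ▸ Finset.mem_filter.mpr ⟨he, hu⟩
        exact (Finset.mem_filter.mp this).2
      · intro hv
        have : e ∈ hstar E u := by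
          rw [hst]; exact Finset.mem_filter.mpr ⟨he, hv⟩
        exact (Finset.mem_filter.mp this).2
    constructor
    · ext e
      simp only [Finset.mem_inter, hT, Finset.mem_filter, hstar]
      constructor
      · rintro ⟨heE, _, hor⟩
        refine ⟨heE, ?_⟩
        rcases hor with h | h
        · exact h
        · exact (huv' e heE).mpr h
      · rintro ⟨heE, hu⟩
        exact ⟨heE, hE heE, Or.inl hu⟩
    · intro e he
      rw [hstar, Finset.mem_filter] at he
      exact Finset.mem_filter.mpr ⟨hE he.1, he.2, (huv' e he.1).mp he.2⟩
  rw [step1]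
  have step2 : ∑ E ∈ Finset.univ.filter
          (fun E => E ⊆ s ∧ hstar E u = hstar E v ∧ (hstar E u).card = r),
          p ^ E.card * (1 - p) ^ (N - E.card)
      = ∑ FG ∈ (B.powersetCard r) ×ˢ (s \ T).powerset,
          (p ^ r * (1 - p) ^ (T.card - r)) *
            (p ^ FG.2.card * (1 - p) ^ ((s \ T).card - FG.2.card)) := by
    apply Finset.sum_nbij' (i := fun E => (E ∩ T, E \ T)) (j := fun FG => FG.1 ∪ FG.2)
    · -- hi
      intro E hE
      rw [Finset.mem_filter] at hE
      obtain ⟨-, hEs, hst, hcard⟩ := hE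
      obtain ⟨hET, hsub⟩ := key E hEs hst
      rw [Finset.mem_product, Finset.mem_powersetCard, Finset.mem_powerset]
      refine ⟨⟨hET ▸ hsub, by rw [hET, hcard]⟩, ?_⟩
      exact Finset.sdiff_subset_sdiff hEs (le_refl T)
    · -- hj
      intro FG hFG
      rw [Finset.mem_product, Finset.mem_powersetCard, Finset.mem_powerset] at hFG
      obtain ⟨⟨hFB, hFcard⟩, hG⟩ := hFG
      rw [Finset.mem_filter]
      have hGT : ∀ e ∈ FG.2, e ∉ T := by
        intro e he
        exact (Finset.mem_sdiff.mp (hG he)).2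
      have hstarF : ∀ w : Fin n, (w = u ∨ w = v) → hstar (FG.1 ∪ FG.2) w = FG.1 := by
        intro w hw
        ext e
        rw [hstar, Finset.mem_filter, Finset.mem_union]
        constructor
        · rintro ⟨hor, hwe⟩
          rcases hor with h | h
          · exact h
          · exfalso
            apply hGT e h
            refine Finset.mem_filter.mpr ⟨(Finset.mem_sdiff.mp (hG h)).1, ?_⟩
            rcases hw with rfl | rfl
            · exact Or.inl hwe
            · exact Or.inr hwe
        · intro h
          have := Finset.mem_filter.mp (hFB h)
          refine ⟨Or.inl h, ?_⟩
          rcases hw with rfl | rfl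
          · exact this.2.1
          · exact this.2.2
      refine ⟨Finset.mem_univ _, ?_, ?_, ?_⟩
      · intro e he
        rcases Finset.mem_union.mp he with h | h
        · exact (hBT.trans hTs) (hFB h)
        · exact (Finset.mem_sdiff.mp (hG h)).1
      · rw [hstarF u (Or.inl rfl), hstarF v (Or.inr rfl)]
      · rw [hstarF u (Or.inl rfl), hFcard]
    · -- left inverse
      intro E _
      ext e
      simp only [Finset.mem_union, Finset.mem_inter, Finset.mem_sdiff]
      tauto
    · -- right inverse
      intro FG hFG
      rw [Finset.mem_product, Finset.mem_powersetCard, Finset.mem_powerset] at hFG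
      obtain ⟨⟨hFB, hFcard⟩, hG⟩ := hFG
      have h1 : (FG.1 ∪ FG.2) ∩ T = FG.1 := by
        ext e
        simp only [Finset.mem_inter, Finset.mem_union]
        constructor
        · rintro ⟨h | h, hT'⟩
          · exact h
          · exact absurd hT' (Finset.mem_sdiff.mp (hG h)).2
        · intro h
          exact ⟨Or.inl h, hBT (hFB h)⟩
      have h2 : (FG.1 ∪ FG.2) \ T = FG.2 := by
        ext e
        simp only [Finset.mem_sdiff, Finset.mem_union]
        constructor
        · rintro ⟨h | h, hT'⟩
          · exact absurd (hBT (hFB h)) hT'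
          · exact h
        · intro h
          exact ⟨Or.inr h, (Finset.mem_sdiff.mp (hG h)).2⟩
      exact Prod.ext h1 h2
    · -- function values
      intro E hE
      rw [Finset.mem_filter] at hE
      obtain ⟨-, hEs, hst, hcard⟩ := hE
      obtain ⟨hET, hsub⟩ := key E hEs hst
      have hr : (E ∩ T).card = r := by rw [hET, hcard]
      have hcardE : (E ∩ T).card + (E \ T).card = E.card :=
        Finset.card_inter_add_card_sdiff E T
      have hrT : r ≤ T.card := by
        rw [← hr]; exact Finset.card_le_card (Finset.inter_subset_right)
      have hGm : (E \ T).card ≤ (s \ T).card :=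
        Finset.card_le_card (Finset.sdiff_subset_sdiff hEs (le_refl T))
      have hNsplit : (s \ T).card + T.card = N :=
        Finset.card_sdiff_add_card_eq_card hTs
      have hcard' : E.card = r + (E \ T).card := by omega
      rw [hcard']
      rw [show N - (r + (E \ T).card)
          = (T.card - r) + ((s \ T).card - (E \ T).card) by omega]
      rw [pow_add, pow_add]
      ring
  rw [step2, Finset.sum_product]
  have inner : ∀ F ∈ B.powersetCard r,
      (∑ G ∈ (s \ T).powerset, (p ^ r * (1 - p) ^ (T.card - r)) *
        (p ^ G.card * (1 - p) ^ ((s \ T).card - G.card)))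
      = p ^ r * (1 - p) ^ (T.card - r) := by
    intro F _
    rw [← Finset.mul_sum, binom_sum, mul_one]
  rw [Finset.sum_congr rfl inner, Finset.sum_const, Finset.card_powersetCard,
    nsmul_eq_mul]
  ring

lemma hexp_Xr (n k r : ℕ) (p : ℝ) :
    hexp n k p (fun E => (Xr n r E : ℝ))
      = ∑ P ∈ (Finset.univ : Finset (Fin n)).powersetCard 2,
          hprob n k p (fun E => (∀ u ∈ P, ∀ v ∈ P, hstar E u = hstar E v) ∧
            ∀ u ∈ P, (hstar E u).card = r) := by
  classical
  simp only [hexp, hprob, Xr, Finset.card_filter]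
  rw [Finset.sum_comm]
  apply Finset.sum_congr rfl
  intro E _
  push_cast
  rw [Finset.mul_sum]
  apply Finset.sum_congr rfl
  intro P _
  split_ifs <;> simp

lemma B_card_le (n k : ℕ) (hk : 2 ≤ k) (u v : Fin n) (huv : u ≠ v) :
    ((kSets n k).filter (fun e => u ∈ e ∧ v ∈ e)).card ≤ n ^ (k - 2) := by
  classical
  have hinj : ((kSets n k).filter (fun e => u ∈ e ∧ v ∈ e)).card ≤
      ((Finset.univ : Finset (Fin n)).powersetCard (k - 2)).card := by
    apply Finset.card_le_card_of_injOn (fun e => e \ {u, v})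
    · intro e he
      rw [Finset.mem_coe, Finset.mem_filter, kSets, Finset.mem_powersetCard] at he
      obtain ⟨⟨-, hcard⟩, hu, hv⟩ := he
      rw [Finset.mem_coe, Finset.mem_powersetCard]
      refine ⟨Finset.subset_univ _, ?_⟩
      rw [Finset.card_sdiff_of_subset (by intro x hx; rcases Finset.mem_insert.mp hx with rfl | hx
                                          · exact hu
                                          · rw [Finset.mem_singleton] at hx; subst hx; exact hv)]
      rw [hcard, Finset.card_insert_of_notMem (by simpa using huv), Finset.card_singleton]
    · intro e1 h1 e2 h2 heq
      rw [Finset.coe_filter, Set.mem_setOf_eq] at h1 h2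
      have hrec : ∀ e : Finset (Fin n), u ∈ e → v ∈ e → e = e \ {u, v} ∪ {u, v} := by
        intro e hu hv
        ext x
        simp only [Finset.mem_union, Finset.mem_sdiff, Finset.mem_insert,
          Finset.mem_singleton]
        constructor
        · intro hx
          by_cases hxu : x = u ∨ x = v
          · exact Or.inr hxu
          · exact Or.inl ⟨hx, hxu⟩
        · rintro (⟨hx, -⟩ | (rfl | rfl)) <;> assumption
      rw [hrec e1 h1.2.1 h1.2.2, hrec e2 h2.2.1 h2.2.2]
      exact congrArg (· ∪ ({u, v} : Finset (Fin n))) heq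
  calc ((kSets n k).filter (fun e => u ∈ e ∧ v ∈ e)).card
      ≤ ((Finset.univ : Finset (Fin n)).powersetCard (k - 2)).card := hinj
    _ = n.choose (k - 2) := by
        rw [Finset.card_powersetCard, Finset.card_univ, Fintype.card_fin]
    _ ≤ n ^ (k - 2) := Nat.choose_le_pow _ _

lemma one_side_card_ge (n k : ℕ) (hk : 2 ≤ k) (u v : Fin n) (huv : u ≠ v) :
    (n - 2).choose (k - 1) ≤ ((kSets n k).filter (fun e => u ∈ e ∧ v ∉ e)).card := by
  classical
  have hcompl : ((Finset.univ : Finset (Fin n)) \ {u, v}).card = n - 2 := by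
    rw [Finset.card_sdiff_of_subset (Finset.subset_univ _), Finset.card_univ, Fintype.card_fin,
      Finset.card_insert_of_notMem (by simpa using huv), Finset.card_singleton]
  have := Finset.card_le_card_of_injOn (f := fun t => insert u t)
    (s := ((Finset.univ : Finset (Fin n)) \ {u, v}).powersetCard (k - 1))
    (t := (kSets n k).filter (fun e => u ∈ e ∧ v ∉ e))
    (by
      intro t ht
      rw [Finset.mem_coe, Finset.mem_powersetCard] at ht
      obtain ⟨hsub, hcard⟩ := ht
      have hut : u ∉ t := by
        intro h
        have := hsub h
        simp at this
      have hvt : v ∉ t := by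
        intro h
        have := hsub h
        simp at this
      rw [Finset.mem_coe, Finset.mem_filter, kSets, Finset.mem_powersetCard]
      refine ⟨⟨Finset.subset_univ _, ?_⟩, Finset.mem_insert_self _ _, ?_⟩
      · rw [Finset.card_insert_of_notMem hut, hcard]
        omega
      · intro h
        rcases Finset.mem_insert.mp h with h | h
        · exact huv h.symm
        · exact hvt h)
    (by
      intro t1 h1 t2 h2 heq
      rw [Finset.mem_coe, Finset.mem_powersetCard] at h1 h2
      have hu1 : u ∉ t1 := fun h => by simpa using h1.1 h
      have hu2 : u ∉ t2 := fun h => by simpa using h2.1 h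
      have heq' : insert u t1 = insert u t2 := heq
      rw [← Finset.erase_insert hu1, ← Finset.erase_insert hu2, heq'])
  rwa [Finset.card_powersetCard, hcompl] at this

lemma T_card_ge (n k : ℕ) (hk : 2 ≤ k) (u v : Fin n) (huv : u ≠ v) :
    2 * (n - 2).choose (k - 1) + ((kSets n k).filter (fun e => u ∈ e ∧ v ∈ e)).card
      ≤ ((kSets n k).filter (fun e => u ∈ e ∨ v ∈ e)).card := by
  classical
  set Tu := (kSets n k).filter (fun e => u ∈ e ∧ v ∉ e)
  set Tv := (kSets n k).filter (fun e => v ∈ e ∧ u ∉ e)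
  set B := (kSets n k).filter (fun e => u ∈ e ∧ v ∈ e)
  have hdisj1 : Disjoint Tu Tv := by
    rw [Finset.disjoint_left]
    intro e h1 h2
    rw [Finset.mem_filter] at h1 h2
    exact h2.2.2 h1.2.1
  have hdisj2 : Disjoint (Tu ∪ Tv) B := by
    rw [Finset.disjoint_left]
    intro e h1 h2
    rw [Finset.mem_filter] at h2
    rcases Finset.mem_union.mp h1 with h | h <;> rw [Finset.mem_filter] at h
    · exact h.2.2 h2.2.2
    · exact h.2.2 h2.2.1
  have hsub : Tu ∪ Tv ∪ B ⊆ (kSets n k).filter (fun e => u ∈ e ∨ v ∈ e) := by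
    intro e he
    rcases Finset.mem_union.mp he with he | he
    · rcases Finset.mem_union.mp he with he | he <;> rw [Finset.mem_filter] at he ⊢
      · exact ⟨he.1, Or.inl he.2.1⟩
      · exact ⟨he.1, Or.inr he.2.1⟩
    · rw [Finset.mem_filter] at he ⊢
      exact ⟨he.1, Or.inl he.2.1⟩
  have hcard : (Tu ∪ Tv ∪ B).card = Tu.card + Tv.card + B.card := by
    rw [Finset.card_union_of_disjoint hdisj2, Finset.card_union_of_disjoint hdisj1]
  have h1 := one_side_card_ge n k hk u v huv
  have h2 := one_side_card_ge n k hk v u huv.symm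
  have h1' : (n - 2).choose (k - 1) ≤ Tu.card := h1
  have h2' : (n - 2).choose (k - 1) ≤ Tv.card := by
    calc (n - 2).choose (k - 1)
        ≤ ((kSets n k).filter (fun e => v ∈ e ∧ u ∉ e)).card := h2
      _ = Tv.card := rfl
  have := Finset.card_le_card hsub
  omega

lemma pair_bound (n k r : ℕ) (hk : 2 ≤ k) (p : ℝ) (hp0 : 0 ≤ p) (hp1 : p ≤ 1)
    (u v : Fin n) (huv : u ≠ v) :
    hprob n k p (fun E => hstar E u = hstar E v ∧ (hstar E u).card = r)
      ≤ ((n:ℝ) ^ (k-2) * p) ^ r *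
        Real.exp (-(p * (2 * ((n-2).choose (k-1) : ℕ)))) := by
  rw [hprob_pair n k p u v huv r]
  set Bc := ((kSets n k).filter (fun e => u ∈ e ∧ v ∈ e)).card with hBc
  set Tc := ((kSets n k).filter (fun e => u ∈ e ∨ v ∈ e)).card with hTc
  set C := (n-2).choose (k-1) with hC
  have h1p : (0:ℝ) ≤ 1 - p := by linarith
  by_cases hrB : r ≤ Bc
  · have hTr : 2 * C ≤ Tc - r := by
      have := T_card_ge n k hk u v huv
      omega
    have hexp1 : (1 - p) ≤ Real.exp (-p) := by
      have := Real.add_one_le_exp (-p)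
      linarith
    have h2 : (1 - p) ^ (Tc - r) ≤ Real.exp (-(p * (2 * (C:ℕ) : ℝ))) := by
      calc (1 - p) ^ (Tc - r) ≤ (1 - p) ^ (2 * C) :=
            pow_le_pow_of_le_one h1p (by linarith) hTr
        _ ≤ Real.exp (-p) ^ (2 * C) := pow_le_pow_left₀ h1p hexp1 _
        _ = Real.exp (-(p * (2 * (C:ℕ) : ℝ))) := by
            rw [← Real.exp_nat_mul]
            congr 1
            push_cast
            ring
    have h1 : (Bc.choose r : ℝ) * p ^ r ≤ ((n:ℝ) ^ (k-2) * p) ^ r := by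
      rw [mul_pow]
      apply mul_le_mul_of_nonneg_right _ (pow_nonneg hp0 r)
      have hn : Bc.choose r ≤ (n ^ (k-2)) ^ r :=
        (Nat.choose_le_pow _ _).trans
          (Nat.pow_le_pow_left (B_card_le n k hk u v huv) r)
      calc (Bc.choose r : ℝ) ≤ ((n ^ (k-2)) ^ r : ℕ) := by exact_mod_cast hn
        _ = ((n:ℝ) ^ (k-2)) ^ r := by push_cast; ring
    calc (Bc.choose r : ℝ) * p ^ r * (1 - p) ^ (Tc - r)
        ≤ ((n:ℝ) ^ (k-2) * p) ^ r * Real.exp (-(p * (2 * (C:ℕ) : ℝ))) := by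
          apply mul_le_mul h1 h2 (pow_nonneg h1p _)
          positivity
      _ = _ := by norm_num
  · rw [Nat.choose_eq_zero_of_lt (by omega)]
    push_cast
    rw [zero_mul, zero_mul]
    positivity

lemma hexp_bound (n k r : ℕ) (hk : 2 ≤ k) (p : ℝ) (hp0 : 0 ≤ p) (hp1 : p ≤ 1) :
    hexp n k p (fun E => (Xr n r E : ℝ))
      ≤ (n:ℝ) ^ 2 * (((n:ℝ) ^ (k-2) * p) ^ r *
          Real.exp (-(p * (2 * ((n-2).choose (k-1) : ℕ))))) := by
  rw [hexp_Xr]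
  set M := ((n:ℝ) ^ (k-2) * p) ^ r *
      Real.exp (-(p * (2 * ((n-2).choose (k-1) : ℕ)))) with hM
  have hM0 : 0 ≤ M := by positivity
  calc ∑ P ∈ (Finset.univ : Finset (Fin n)).powersetCard 2,
        hprob n k p (fun E => (∀ u ∈ P, ∀ v ∈ P, hstar E u = hstar E v) ∧
          ∀ u ∈ P, (hstar E u).card = r)
      ≤ ∑ _P ∈ (Finset.univ : Finset (Fin n)).powersetCard 2, M := by
        apply Finset.sum_le_sum
        intro P hP
        rw [Finset.mem_powersetCard] at hP
        obtain ⟨u, v, huv, rfl⟩ := Finset.card_eq_two.mp hP.2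
        have hcong : ∀ E : Finset (Finset (Fin n)),
            ((∀ a ∈ ({u, v} : Finset (Fin n)), ∀ b ∈ ({u, v} : Finset (Fin n)),
                hstar E a = hstar E b) ∧
              ∀ a ∈ ({u, v} : Finset (Fin n)), (hstar E a).card = r)
            ↔ (hstar E u = hstar E v ∧ (hstar E u).card = r) := by
          intro E
          constructor
          · rintro ⟨h1, h2⟩
            exact ⟨h1 u (by simp) v (by simp), h2 u (by simp)⟩
          · rintro ⟨h1, h2⟩
            constructor
            · intro a ha b hb
              simp only [Finset.mem_insert, Finset.mem_singleton] at ha hb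
              rcases ha with rfl | rfl <;> rcases hb with rfl | rfl
              · rfl
              · exact h1
              · exact h1.symm
              · rfl
            · intro a ha
              simp only [Finset.mem_insert, Finset.mem_singleton] at ha
              rcases ha with rfl | rfl
              · exact h2
              · rw [← h1]; exact h2
        rw [hprob_congr n k p _ _ hcong]
        exact pair_bound n k r hk p hp0 hp1 u v huv
    _ = (((Finset.univ : Finset (Fin n)).powersetCard 2).card : ℝ) * M := by
        rw [Finset.sum_const, nsmul_eq_mul]
    _ ≤ (n:ℝ) ^ 2 * M := by
        apply mul_le_mul_of_nonneg_right _ hM0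
        rw [Finset.card_powersetCard, Finset.card_univ, Fintype.card_fin]
        calc ((n.choose 2 : ℕ) : ℝ) ≤ ((n ^ 2 : ℕ) : ℝ) := by
              exact_mod_cast Nat.choose_le_pow n 2
          _ = (n:ℝ) ^ 2 := by push_cast; ring

lemma hexp_nonneg (n k r : ℕ) (p : ℝ) (hp0 : 0 ≤ p) (hp1 : p ≤ 1) :
    0 ≤ hexp n k p (fun E => (Xr n r E : ℝ)) := by
  apply Finset.sum_nonneg
  intro E _
  exact mul_nonneg (hweight_nonneg n k p hp0 hp1 E) (Nat.cast_nonneg _)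

lemma hprob_nonneg (n k : ℕ) (p : ℝ) (hp0 : 0 ≤ p) (hp1 : p ≤ 1)
    (A : Finset (Finset (Fin n)) → Prop) : 0 ≤ hprob n k p A := by
  apply Finset.sum_nonneg
  intro E _
  split_ifs
  · exact hweight_nonneg n k p hp0 hp1 E
  · exact le_refl _

lemma hprob_le_hexp (n k r : ℕ) (p : ℝ) (hp0 : 0 ≤ p) (hp1 : p ≤ 1) :
    hprob n k p (fun E => 1 ≤ Xr n r E) ≤ hexp n k p (fun E => (Xr n r E : ℝ)) := by
  apply Finset.sum_le_sum
  intro E _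
  have hw := hweight_nonneg n k p hp0 hp1 E
  split_ifs with h
  · have h' : 1 ≤ Xr n r E := h
    exact le_mul_of_one_le_right hw
      (show (1:ℝ) ≤ ((Xr n r E : ℕ) : ℝ) by exact_mod_cast h')
  · exact mul_nonneg hw (Nat.cast_nonneg _)

open Filter

lemma log_div_tendsto : Tendsto (fun n : ℕ => Real.log n / (n:ℝ)) atTop (nhds 0) :=
  (Real.isLittleO_log_id_atTop.tendsto_div_nhds_zero).comp tendsto_natCast_atTop_atTop

lemma ratio_tendsto (a b : ℝ) :
    Tendsto (fun n : ℕ => ((n:ℝ) - a) / ((n:ℝ) - b)) atTop (nhds 1) := by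
  have hN := tendsto_natCast_atTop_atTop (R := ℝ)
  have h1 : Tendsto (fun n : ℕ => 1 - a / (n:ℝ)) atTop (nhds 1) := by
    simpa using tendsto_const_nhds.sub (tendsto_const_nhds.div_atTop hN)
  have h2 : Tendsto (fun n : ℕ => 1 - b / (n:ℝ)) atTop (nhds 1) := by
    simpa using tendsto_const_nhds.sub (tendsto_const_nhds.div_atTop hN)
  have h3 := h1.div h2 one_ne_zero
  norm_num at h3
  apply h3.congr'
  filter_upwards [hN.eventually_ge_atTop (|b| + 1), hN.eventually_ge_atTop 1] with n hn hn1
  have hn0 : (n:ℝ) ≠ 0 := by linarith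
  have hb' : b < (n:ℝ) := lt_of_le_of_lt (le_abs_self b) (by linarith)
  have hnb : (n:ℝ) - b ≠ 0 := by intro h; linarith [sub_eq_zero.mp h]
  have hden : 1 - b / (n:ℝ) ≠ 0 := by
    have : 1 - b / (n:ℝ) = ((n:ℝ) - b) / (n:ℝ) := by field_simp
    rw [this]
    exact div_ne_zero hnb hn0
  simp only [Pi.div_apply]
  field_simp

lemma base_tendsto (k : ℕ) (hk : 2 ≤ k) (c : ℝ) (p : ℕ → ℝ)
    (hp : ∀ᶠ n in atTop, 0 ≤ p n ∧ p n ≤ 1)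
    (hlam : ∀ᶠ n in atTop, ((n - 1).choose (k - 1) : ℝ) * p n = Real.log n + c) :
    Tendsto (fun n : ℕ => (n:ℝ) ^ (k-2) * p n) atTop (nhds 0) := by
  have hN := tendsto_natCast_atTop_atTop (R := ℝ)
  have hlogc : ∀ᶠ n : ℕ in atTop, 0 ≤ Real.log n + c := by
    have := (Real.tendsto_log_atTop.comp hN).eventually_ge_atTop (-c)
    filter_upwards [this] with n hn
    simp only [Function.comp_apply] at hn
    linarith
  set g : ℕ → ℝ := fun n =>
    (Nat.factorial (k-1) : ℝ) * ((n:ℝ) ^ (k-2) * (Real.log n + c)) / (((n:ℝ) - k + 1) ^ (k-1))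
    with hg
  have hupper : ∀ᶠ n : ℕ in atTop, (n:ℝ) ^ (k-2) * p n ≤ g n := by
    filter_upwards [hp, hlam, hlogc, eventually_ge_atTop (2*k+2)] with n hpn hl hlog hn
    have hkn : k ≤ n := by omega
    have hD : (0:ℝ) < (n:ℝ) - k + 1 := by
      have : (k:ℝ) ≤ (n:ℝ) := by exact_mod_cast hkn
      linarith
    have hDpow : (0:ℝ) < ((n:ℝ) - k + 1) ^ (k-1) := pow_pos hD _
    have hC : (0:ℝ) < (((n-1).choose (k-1) : ℕ) : ℝ) := by
      have : 0 < (n-1).choose (k-1) := Nat.choose_pos (by omega)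
      exact_mod_cast this
    have hlow : ((n:ℝ) - k + 1) ^ (k-1) ≤ (Nat.factorial (k-1) : ℝ) * (((n-1).choose (k-1) : ℕ) : ℝ) := by
      have h := Nat.pow_le_choose (α := ℝ) (k-1) (n-1)
      have he : n - 1 + 1 - (k-1) = n - k + 1 := by omega
      rw [he] at h
      have hcast : (((n - k + 1 : ℕ)) : ℝ) = (n:ℝ) - k + 1 := by
        push_cast [hkn]
        ring
      rw [hcast] at h
      rw [div_le_iff₀ (by positivity : (0:ℝ) < (Nat.factorial (k-1) : ℝ))] at h
      linarith [h]
    have hp_eq : p n = (Real.log n + c) / (((n-1).choose (k-1) : ℕ) : ℝ) := by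
      field_simp
      linarith [hl]
    have h5 : p n ≤ (Nat.factorial (k-1) : ℝ) * (Real.log n + c) / (((n:ℝ) - k + 1) ^ (k-1)) := by
      rw [hp_eq, div_le_div_iff₀ hC hDpow]
      calc (Real.log n + c) * ((n:ℝ) - k + 1) ^ (k-1)
          ≤ (Real.log n + c) * ((Nat.factorial (k-1) : ℝ) * (((n-1).choose (k-1) : ℕ) : ℝ)) :=
            mul_le_mul_of_nonneg_left hlow hlog
        _ = (Nat.factorial (k-1) : ℝ) * (Real.log n + c) * (((n-1).choose (k-1) : ℕ) : ℝ) := by ring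
    calc (n:ℝ) ^ (k-2) * p n
        ≤ (n:ℝ) ^ (k-2) * ((Nat.factorial (k-1) : ℝ) * (Real.log n + c) / (((n:ℝ) - k + 1) ^ (k-1))) :=
          mul_le_mul_of_nonneg_left h5 (by positivity)
      _ = g n := by rw [hg]; ring
  have hglim : Tendsto g atTop (nhds 0) := by
    have hA : Tendsto (fun n : ℕ => ((n:ℝ) / ((n:ℝ) - ((k:ℝ) - 1))) ^ (k-2)) atTop (nhds 1) := by
      have := (ratio_tendsto 0 ((k:ℝ) - 1)).pow (k-2)
      simpa using this
    have hB : Tendsto (fun n : ℕ => Real.log n / (n:ℝ) + c / (n:ℝ)) atTop (nhds 0) := by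
      simpa using log_div_tendsto.add (tendsto_const_nhds.div_atTop hN)
    have hA2 : Tendsto (fun n : ℕ => (n:ℝ) / ((n:ℝ) - ((k:ℝ) - 1))) atTop (nhds 1) := by
      have := ratio_tendsto 0 ((k:ℝ) - 1)
      simpa using this
    have hprod : Tendsto (fun n : ℕ =>
        (Nat.factorial (k-1) : ℝ) * (((n:ℝ) / ((n:ℝ) - ((k:ℝ) - 1))) ^ (k-2) *
          ((Real.log n / (n:ℝ) + c / (n:ℝ)) * ((n:ℝ) / ((n:ℝ) - ((k:ℝ) - 1))))))
        atTop (nhds 0) := by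
      have := tendsto_const_nhds (x := (Nat.factorial (k-1) : ℝ)) (f := atTop (α := ℕ)) |>.mul
        (hA.mul (hB.mul hA2))
      simpa using this
    apply hprod.congr'
    filter_upwards [eventually_ge_atTop (k+1)] with n hn
    have hn0 : (n:ℝ) ≠ 0 := by
      have : (0:ℝ) < n := by exact_mod_cast (by omega : 0 < n)
      linarith
    have hD : (0:ℝ) < (n:ℝ) - ((k:ℝ) - 1) := by
      have : (k:ℝ) + 1 ≤ (n:ℝ) := by exact_mod_cast hn
      linarith
    have hDne : (n:ℝ) - ((k:ℝ) - 1) ≠ 0 := ne_of_gt hD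
    simp only [hg]
    have hk1 : k - 1 = (k - 2) + 1 := by omega
    have heq : (n:ℝ) - (k:ℝ) + 1 = (n:ℝ) - ((k:ℝ) - 1) := by ring
    rw [hk1, heq, pow_succ]
    field_simp
    rw [div_pow]
    field_simp
  apply squeeze_zero' _ hupper hglim
  filter_upwards [hp] with n hpn
  exact mul_nonneg (by positivity) hpn.1

lemma expf_tendsto (k : ℕ) (hk : 2 ≤ k) (c : ℝ) (p : ℕ → ℝ)
    (hlam : ∀ᶠ n in atTop, ((n - 1).choose (k - 1) : ℝ) * p n = Real.log n + c) :
    Tendsto (fun n : ℕ => (n:ℝ) ^ 2 *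
        Real.exp (-(p n * (2 * (((n-2).choose (k-1) : ℕ) : ℝ))))) atTop
      (nhds (Real.exp (-(2*c)))) := by
  have hN := tendsto_natCast_atTop_atTop (R := ℝ)
  set En : ℕ → ℝ := fun n =>
    2 * ((k:ℝ) - 1) * (Real.log n / (n:ℝ) * ((n:ℝ) / ((n:ℝ) - 1)))
      - 2 * c * (((n:ℝ) - (k:ℝ)) / ((n:ℝ) - 1)) with hEn
  have hElim : Tendsto En atTop (nhds (-(2*c))) := by
    have h1 : Tendsto (fun n : ℕ => (n:ℝ) / ((n:ℝ) - 1)) atTop (nhds 1) := by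
      have := ratio_tendsto 0 1
      simpa using this
    have h2 : Tendsto (fun n : ℕ => ((n:ℝ) - (k:ℝ)) / ((n:ℝ) - 1)) atTop (nhds 1) :=
      ratio_tendsto (k:ℝ) 1
    have h3 := (tendsto_const_nhds (x := 2 * ((k:ℝ) - 1))).mul
      (log_div_tendsto.mul h1)
    have h4 := (tendsto_const_nhds (x := 2 * c)).mul h2
    have := h3.sub h4
    simpa [hEn] using this
  have hexp : Tendsto (fun n => Real.exp (En n)) atTop (nhds (Real.exp (-(2*c)))) :=
    (Real.continuous_exp.tendsto _).comp hElim
  apply hexp.congr'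
  filter_upwards [hlam, eventually_ge_atTop (k+2)] with n hl hn
  have hn1 : (1:ℝ) ≤ (n:ℝ) := by exact_mod_cast (by omega : 1 ≤ n)
  have hnk : (k:ℝ) ≤ (n:ℝ) := by exact_mod_cast (by omega : k ≤ n)
  have hn0 : (0:ℝ) < (n:ℝ) := by linarith
  have hn1ne : (n:ℝ) - 1 ≠ 0 := by
    have : (2:ℝ) ≤ (n:ℝ) := by exact_mod_cast (by omega : 2 ≤ n)
    intro h; linarith [sub_eq_zero.mp h]
  -- Pascal-type identity
  have hNat : (n-2).choose (k-1) * (n-1) = (n-1).choose (k-1) * (n-k) := by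
    have h := Nat.choose_mul_succ_eq (n-2) (k-1)
    have e1 : n - 2 + 1 = n - 1 := by omega
    rw [e1] at h
    have e2 : n - 1 - (k-1) = n - k := by omega
    rw [e2] at h
    exact h
  have hcastid : (((n-2).choose (k-1) : ℕ) : ℝ) * ((n:ℝ) - 1)
      = (((n-1).choose (k-1) : ℕ) : ℝ) * ((n:ℝ) - (k:ℝ)) := by
    have := congrArg (fun m : ℕ => (m : ℝ)) hNat
    push_cast [Nat.cast_sub (by omega : 1 ≤ n), Nat.cast_sub (by omega : k ≤ n)] at this
    exact this
  have hb : (((n-2).choose (k-1) : ℕ) : ℝ)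
      = (((n-1).choose (k-1) : ℕ) : ℝ) * (((n:ℝ) - (k:ℝ)) / ((n:ℝ) - 1)) := by
    rw [mul_div_assoc'] at *
    rw [eq_div_iff hn1ne]
    exact hcastid
  have hc : p n * (2 * (((n-2).choose (k-1) : ℕ) : ℝ))
      = 2 * (Real.log n + c) * (((n:ℝ) - (k:ℝ)) / ((n:ℝ) - 1)) := by
    calc p n * (2 * (((n-2).choose (k-1) : ℕ) : ℝ))
        = 2 * ((((n-1).choose (k-1) : ℕ) : ℝ) * p n) * (((n:ℝ) - (k:ℝ)) / ((n:ℝ) - 1)) := by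
          rw [hb]; ring
      _ = 2 * (Real.log n + c) * (((n:ℝ) - (k:ℝ)) / ((n:ℝ) - 1)) := by rw [hl]
  have hd : (n:ℝ) ^ 2 = Real.exp (2 * Real.log n) := by
    rw [two_mul, Real.exp_add, Real.exp_log hn0]
    ring
  rw [hc, hd, ← Real.exp_add]
  congr 1
  simp only [hEn]
  have hnne : (n:ℝ) ≠ 0 := ne_of_gt hn0
  field_simp
  ring


/-- In `H(n,k,p_n)` with expected degree `λ_n = C(n-1,k-1) p_n = log n + c`, for every
fixed `r ≥ 1` the expected number of star-collisions of support size `r` tends to `0`,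
and in particular `P(X_r ≥ 1) → 0`. -/
theorem stmt11 (k : ℕ) (hk : 2 ≤ k) (c : ℝ) (p : ℕ → ℝ)
    (hp : ∀ᶠ n in atTop, 0 ≤ p n ∧ p n ≤ 1)
    (hlam : ∀ᶠ n in atTop, ((n - 1).choose (k - 1) : ℝ) * p n = Real.log n + c)
    (r : ℕ) (hr : 1 ≤ r) :
    Tendsto (fun n => hexp n k (p n) (fun E => (Xr n r E : ℝ))) atTop (nhds 0)
      ∧ Tendsto (fun n => hprob n k (p n) (fun E => 1 ≤ Xr n r E)) atTop (nhds 0) := by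
  have hBtend : Tendsto (fun n : ℕ =>
      ((n:ℝ) ^ 2 * Real.exp (-(p n * (2 * (((n-2).choose (k-1) : ℕ) : ℝ))))) *
        ((n:ℝ) ^ (k-2) * p n) ^ r) atTop (nhds 0) := by
    have h1 := expf_tendsto k hk c p hlam
    have h2 : Tendsto (fun n : ℕ => ((n:ℝ) ^ (k-2) * p n) ^ r) atTop (nhds 0) := by
      have := (base_tendsto k hk c p hp hlam).pow r
      rwa [zero_pow (by omega : r ≠ 0)] at this
    simpa using h1.mul h2
  have hE : Tendsto (fun n => hexp n k (p n) (fun E => (Xr n r E : ℝ))) atTop (nhds 0) := by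
    apply squeeze_zero' ?_ ?_ hBtend
    · filter_upwards [hp] with n hpn
      exact hexp_nonneg n k r (p n) hpn.1 hpn.2
    · filter_upwards [hp] with n hpn
      calc hexp n k (p n) (fun E => (Xr n r E : ℝ))
          ≤ (n:ℝ) ^ 2 * (((n:ℝ) ^ (k-2) * p n) ^ r *
              Real.exp (-(p n * (2 * (((n-2).choose (k-1) : ℕ) : ℝ))))) :=
            hexp_bound n k r hk (p n) hpn.1 hpn.2
        _ = ((n:ℝ) ^ 2 * Real.exp (-(p n * (2 * (((n-2).choose (k-1) : ℕ) : ℝ))))) *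
              ((n:ℝ) ^ (k-2) * p n) ^ r := by ring
  refine ⟨hE, ?_⟩
  apply squeeze_zero' ?_ ?_ hE
  · filter_upwards [hp] with n hpn
    exact hprob_nonneg n k (p n) hpn.1 hpn.2 _
  · filter_upwards [hp] with n hpn
    exact hprob_le_hexp n k r (p n) hpn.1 hpn.2
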